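/- Let P: C^n → R, n ≥ 2, be a non-constant plurisubharmonic polynomial without pluriharmonic terms, homogeneous of degree 2k, and homogeneous of degree 2d_j in (z_j, z̄_j) for j = 1,...,l, where 1 ≤ l ≤ n−1, d_j ∈ Z_{>0}, and k − D > 0 with D = d_1+···+d_l. Let d = gcd(d_1,...,d_l,k). Then there exists a plurisubharmonic polynomial Q: C^{n−l} → R without pluriharmonic terms, homogeneous of degree 2k−2D, such that both the holomorphic and anti-holomorphic degree of every monomial of Q are divisible by (k−D)/d, and such that P(z_1,...,z_n) = Q(τ z_{l+1},...,τ z_n) for every z ∈ C^n and every τ ∈ C with τ^{(k−D)/d} = z_1^{d_1/d}···z_l^{d_l/d}. -/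

import Mathlib

open Finset
open scoped ComplexConjugate

/-- Multi-index power `z^α = ∏ i, z i ^ α i`. -/
noncomputable def mpow {n : ℕ} (z : Fin n → ℂ) (α : Fin n →₀ ℕ) : ℂ :=
  ∏ i, z i ^ α i

/-- Value of the polynomial `P(z) = ∑_{(α,β)∈J} a_{α,β} z^α z̄^β`. -/
noncomputable def pval {n : ℕ} (J : Finset ((Fin n →₀ ℕ) × (Fin n →₀ ℕ)))
    (a : (Fin n →₀ ℕ) × (Fin n →₀ ℕ) → ℂ) (z : Fin n → ℂ) : ℂ :=
  ∑ p ∈ J, a p * mpow z p.1 * conj (mpow z p.2)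

/-- Levi form `L(P; z, V) = ∑_{i,j} (∂²P/∂z_i∂z̄_j)(z) V_i conj(V_j)` of
`P(z) = ∑_{(α,β)∈J} a_{α,β} z^α z̄^β`, computed termwise via
`∂²(z^α z̄^β)/∂z_i∂z̄_j = α_i β_j z^{α-e_i} z̄^{β-e_j}`. -/
noncomputable def leviForm {n : ℕ} (J : Finset ((Fin n →₀ ℕ) × (Fin n →₀ ℕ)))
    (a : (Fin n →₀ ℕ) × (Fin n →₀ ℕ) → ℂ) (z V : Fin n → ℂ) : ℂ :=
  ∑ p ∈ J, a p * ∑ i, ∑ j,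
    (p.1 i : ℂ) * (p.2 j : ℂ) * mpow z (p.1 - Finsupp.single i 1) *
      conj (mpow z (p.2 - Finsupp.single j 1)) * V i * conj (V j)


section Indep

variable {n : ℕ}

lemma mpow_mul (z w : Fin n → ℂ) (α : Fin n →₀ ℕ) :
    mpow (z * w) α = mpow z α * mpow w α := by
  simp [mpow, mul_pow, Finset.prod_mul_distrib]

lemma mpow_one' (α : Fin n →₀ ℕ) : mpow (1 : Fin n → ℂ) α = 1 := by
  simp [mpow]

/-- The character `z ↦ z^α conj(z)^β` as a monoid hom on `(Fin n → ℂ, *)`. -/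
noncomputable def charOf (p : (Fin n →₀ ℕ) × (Fin n →₀ ℕ)) : (Fin n → ℂ) →* ℂ where
  toFun z := mpow z p.1 * conj (mpow z p.2)
  map_one' := by simp [mpow_one']
  map_mul' z w := by
    simp only [mpow_mul, map_mul]; ring

lemma mpow_update_one (i : Fin n) (w : ℂ) (α : Fin n →₀ ℕ) :
    mpow (Function.update (1 : Fin n → ℂ) i w) α = w ^ α i := by
  unfold mpow
  rw [Finset.prod_eq_single_of_mem i (Finset.mem_univ i)]
  · simp
  · intro j _ hj
    simp [Function.update_of_ne hj]

lemma pow_conj_cancel_aux {u v u' v' : ℕ}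
    (h : ∀ w : ℂ, w ^ u * (conj w) ^ v = w ^ u' * (conj w) ^ v')
    (hsum : u + v = u' + v') (hlt : u' < u) : False := by
  set δ := u - u' with hδdef
  have hδ : 0 < δ := by omega
  have hu : u = u' + δ := by omega
  have hv' : v' = v + δ := by omega
  set θ : ℝ := Real.pi / (2 * δ) with hθ
  set w : ℂ := Complex.exp (↑θ * Complex.I) with hw
  have hcw : conj w = Complex.exp (-(↑θ * Complex.I)) := by
    rw [hw, ← Complex.exp_conj]; congr 1; simp
  have hwne : w ≠ 0 := Complex.exp_ne_zero _
  have hcwne : conj w ≠ 0 := by rw [hcw]; exact Complex.exp_ne_zero _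
  have heq := h w
  rw [hu, hv', pow_add, pow_add] at heq
  have h2 : w ^ δ = (conj w) ^ δ := by
    have h3 : w ^ u' * ((conj w) ^ v * w ^ δ) = w ^ u' * ((conj w) ^ v * (conj w) ^ δ) := by
      rw [← heq]; ring
    have h4 := mul_left_cancel₀ (pow_ne_zero _ hwne) h3
    exact mul_left_cancel₀ (pow_ne_zero _ hcwne) h4
  have hwd : w ^ δ = Complex.I := by
    rw [hw, ← Complex.exp_nat_mul]
    have hθδ : (δ:ℝ) * θ = Real.pi / 2 := by
      have hδR : (δ : ℝ) ≠ 0 := Nat.cast_ne_zero.2 (by omega)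
      rw [hθ]; field_simp
    have : (δ : ℂ) * (↑θ * Complex.I) = ↑(Real.pi/2) * Complex.I := by
      rw [← hθδ]; push_cast; ring
    rw [this, Complex.exp_mul_I, ← Complex.ofReal_cos, ← Complex.ofReal_sin,
      Real.cos_pi_div_two, Real.sin_pi_div_two]
    simp
  have hcwd : (conj w) ^ δ = -Complex.I := by
    rw [← map_pow, hwd]; simp
  rw [hwd, hcwd] at h2
  exact Complex.I_ne_zero (by linear_combination h2 / 2)

lemma pow_conj_inj {a b a' b' : ℕ}
    (h : ∀ w : ℂ, w ^ a * (conj w) ^ b = w ^ a' * (conj w) ^ b') :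
    a = a' ∧ b = b' := by
  have h2 := h 2
  have hc2 : conj (2:ℂ) = 2 := by
    rw [show (2:ℂ) = ((2:ℝ):ℂ) by norm_num, Complex.conj_ofReal]
  rw [hc2, ← pow_add, ← pow_add] at h2
  have hsum : a + b = a' + b' := by
    have : ((2 ^ (a+b) : ℕ) : ℂ) = ((2 ^ (a'+b') : ℕ) : ℂ) := by push_cast; exact h2
    exact Nat.pow_right_injective le_rfl (Nat.cast_injective this)
  rcases lt_trichotomy a a' with hlt | heq | hgt
  · exact absurd (pow_conj_cancel_aux (fun w => (h w).symm) hsum.symm hlt) (fun x => x)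
  · constructor
    · exact heq
    · omega
  · exact absurd (pow_conj_cancel_aux h hsum hgt) (fun x => x)

lemma charOf_injective : Function.Injective (charOf (n := n)) := by
  intro p q hpq
  have hev : ∀ i : Fin n, ∀ w : ℂ,
      w ^ p.1 i * (conj w) ^ p.2 i = w ^ q.1 i * (conj w) ^ q.2 i := by
    intro i w
    have := DFunLike.congr_fun hpq (Function.update (1 : Fin n → ℂ) i w)
    simpa [charOf, mpow_update_one, map_pow] using this
  have h1 : ∀ i : Fin n, p.1 i = q.1 i ∧ p.2 i = q.2 i := fun i => pow_conj_inj (hev i)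
  ext i
  · exact (h1 i).1
  · exact (h1 i).2

lemma mpow_indep (S : Finset ((Fin n →₀ ℕ) × (Fin n →₀ ℕ)))
    (c : (Fin n →₀ ℕ) × (Fin n →₀ ℕ) → ℂ)
    (h : ∀ z : Fin n → ℂ, ∑ p ∈ S, c p * mpow z p.1 * conj (mpow z p.2) = 0) :
    ∀ p ∈ S, c p = 0 := by
  have li := (linearIndependent_monoidHom (Fin n → ℂ) ℂ).comp charOf charOf_injective
  rw [linearIndependent_iff'] at li
  refine li S c ?_
  funext z
  have hz := h z
  simp only [Finset.sum_apply, Pi.smul_apply, Function.comp_apply, smul_eq_mul, charOf,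
    MonoidHom.coe_mk, OneHom.coe_mk, Pi.zero_apply]
  rw [← hz]
  exact Finset.sum_congr rfl (fun p _ => by ring)

end Indep

section Levi

variable {n : ℕ}

/-- Weighted degree `∑ i, w i * α i`. -/
def Wsum (w : Fin n → ℤ) (α : Fin n →₀ ℕ) : ℤ := ∑ i, w i * α i

lemma mpow_factor {y : Fin n → ℂ} {α : Fin n →₀ ℕ} {i : Fin n} (h : α i ≠ 0) :
    y i * mpow y (α - Finsupp.single i 1) = mpow y α := by
  set γ : Fin n →₀ ℕ := α - Finsupp.single i 1 with hγ
  have hγi : γ i = α i - 1 := by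
    rw [hγ, Finsupp.tsub_apply, Finsupp.single_eq_same]
  have hγj : ∀ j, j ≠ i → γ j = α j := by
    intro j hj
    rw [hγ, Finsupp.tsub_apply, Finsupp.single_eq_of_ne' (Ne.symm hj)]
    omega
  unfold mpow
  rw [← Finset.mul_prod_erase Finset.univ (fun j => y j ^ γ j) (Finset.mem_univ i),
    ← Finset.mul_prod_erase Finset.univ (fun j => y j ^ α j) (Finset.mem_univ i)]
  have h1 : ∀ j ∈ Finset.univ.erase i, y j ^ γ j = y j ^ α j := by
    intro j hj
    rw [hγj j (Finset.mem_erase.mp hj).1]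
  rw [Finset.prod_congr rfl h1, hγi, ← mul_assoc, ← pow_succ']
  congr 2
  omega

lemma sum_deriv (w : Fin n → ℤ) (y : Fin n → ℂ) (α : Fin n →₀ ℕ) :
    ∑ i, (α i : ℂ) * mpow y (α - Finsupp.single i 1) * ((w i : ℂ) * Complex.I * y i)
      = (Wsum w α : ℂ) * Complex.I * mpow y α := by
  have key : ∀ i : Fin n, (α i : ℂ) * mpow y (α - Finsupp.single i 1) * ((w i : ℂ) * Complex.I * y i)
      = ((w i : ℂ) * (α i : ℂ)) * Complex.I * mpow y α := by
    intro i
    by_cases h : α i = 0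
    · simp [h]
    · rw [← mpow_factor (y := y) (α := α) (i := i) h]; ring
  rw [Finset.sum_congr rfl (fun i _ => key i), Wsum]
  push_cast
  rw [Finset.sum_mul, Finset.sum_mul]

lemma leviForm_eq_prod (J : Finset ((Fin n →₀ ℕ) × (Fin n →₀ ℕ)))
    (a : (Fin n →₀ ℕ) × (Fin n →₀ ℕ) → ℂ) (y V : Fin n → ℂ) :
    leviForm J a y V = ∑ p ∈ J, a p *
      ((∑ i, (p.1 i : ℂ) * mpow y (p.1 - Finsupp.single i 1) * V i) *
       conj (∑ i, (p.2 i : ℂ) * mpow y (p.2 - Finsupp.single i 1) * V i)) := by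
  unfold leviForm
  refine Finset.sum_congr rfl fun p _ => ?_
  congr 1
  rw [map_sum, Finset.sum_mul_sum]
  refine Finset.sum_congr rfl fun i _ => ?_
  refine Finset.sum_congr rfl fun j _ => ?_
  simp only [map_mul, Complex.conj_natCast]
  ring

lemma leviForm_curve (J : Finset ((Fin n →₀ ℕ) × (Fin n →₀ ℕ)))
    (a : (Fin n →₀ ℕ) × (Fin n →₀ ℕ) → ℂ) (w : Fin n → ℤ) (y : Fin n → ℂ)
    (hW : ∀ p ∈ J, Wsum w p.1 + Wsum w p.2 = 0) :
    leviForm J a y (fun i => (w i : ℂ) * Complex.I * y i)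
      = -∑ p ∈ J, (a p * ((Wsum w p.1 : ℤ) : ℂ)^2) * mpow y p.1 * conj (mpow y p.2) := by
  rw [leviForm_eq_prod, ← Finset.sum_neg_distrib]
  refine Finset.sum_congr rfl fun p hp => ?_
  rw [sum_deriv, sum_deriv]
  have h2 : ((Wsum w p.2 : ℤ) : ℂ) = -((Wsum w p.1 : ℤ) : ℂ) := by
    have := hW p hp
    push_cast [show Wsum w p.2 = -Wsum w p.1 by omega]
    ring
  simp only [map_mul, map_neg, map_intCast, Complex.conj_I, h2]
  linear_combination (a p * ((Wsum w p.1 : ℤ) : ℂ)^2 * mpow y p.1 *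
    conj (mpow y p.2)) * Complex.I_sq

end Levi

section Rot

variable {n : ℕ}

/-- The weighted rotation `z_i ↦ e^{i w_i t} z_i`. -/
noncomputable def rotp (w : Fin n → ℤ) (t : ℝ) (z : Fin n → ℂ) : Fin n → ℂ :=
  fun i => Complex.exp ((w i : ℂ) * (t : ℂ) * Complex.I) * z i

lemma rotp_zero (w : Fin n → ℤ) (z : Fin n → ℂ) : rotp w 0 z = z := by
  funext i
  simp [rotp]

lemma mpow_rotp (w : Fin n → ℤ) (t : ℝ) (z : Fin n → ℂ) (α : Fin n →₀ ℕ) :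
    mpow (rotp w t z) α
      = Complex.exp (((Wsum w α : ℤ) : ℂ) * (t : ℂ) * Complex.I) * mpow z α := by
  unfold mpow rotp
  simp only [mul_pow]
  rw [Finset.prod_mul_distrib]
  congr 1
  have key : ∀ i : Fin n,
      Complex.exp ((w i : ℂ) * (t : ℂ) * Complex.I) ^ (α i)
        = Complex.exp ((α i : ℂ) * ((w i : ℂ) * (t : ℂ) * Complex.I)) := by
    intro i
    rw [Complex.exp_nat_mul]
  rw [Finset.prod_congr rfl (fun i _ => key i), ← Complex.exp_sum]
  congr 1
  rw [Wsum]
  push_cast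
  rw [Finset.sum_mul, Finset.sum_mul]
  refine Finset.sum_congr rfl fun i _ => ?_
  ring

lemma conj_mpow_rotp (w : Fin n → ℤ) (t : ℝ) (z : Fin n → ℂ) (α : Fin n →₀ ℕ) :
    conj (mpow (rotp w t z) α)
      = Complex.exp (-(((Wsum w α : ℤ) : ℂ) * (t : ℂ) * Complex.I)) * conj (mpow z α) := by
  rw [mpow_rotp, map_mul, ← Complex.exp_conj]
  congr 2
  simp

/-- Sum of a nontrivial character over the `M`-th roots of unity vanishes. -/
lemma roots_sum_zero (W : ℤ) (M : ℕ) (hW : W ≠ 0) (habs : 2 * W.natAbs < M) :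
    ∑ r ∈ Finset.range M, Complex.exp (((2 * W : ℤ) : ℂ)
      * ((2 * Real.pi * r / M : ℝ) : ℂ) * Complex.I) = 0 := by
  have hM : (M : ℝ) ≠ 0 := Nat.cast_ne_zero.2 (by omega)
  set ω : ℂ := Complex.exp (((2 * W : ℤ) : ℂ) * ((2 * Real.pi / M : ℝ) : ℂ) * Complex.I) with hω
  have hterm : ∀ r ∈ Finset.range M, Complex.exp (((2 * W : ℤ) : ℂ)
      * ((2 * Real.pi * r / M : ℝ) : ℂ) * Complex.I) = ω ^ r := by
    intro r _
    rw [hω, ← Complex.exp_nat_mul]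
    congr 1
    push_cast
    ring
  rw [Finset.sum_congr rfl hterm]
  have hMc : (M : ℂ) ≠ 0 := Nat.cast_ne_zero.2 (by omega)
  have hωM : ω ^ M = 1 := by
    rw [hω, ← Complex.exp_nat_mul]
    have harg : (M : ℂ) * (((2 * W : ℤ) : ℂ) * ((2 * Real.pi / M : ℝ) : ℂ) * Complex.I)
        = ((2 * W : ℤ) : ℂ) * (2 * (Real.pi : ℂ) * Complex.I) := by
      push_cast
      field_simp
    rw [harg]
    exact_mod_cast Complex.exp_int_mul_two_pi_mul_I (2 * W)
  have hω1 : ω ≠ 1 := by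
    rw [hω]
    intro hcon
    rw [Complex.exp_eq_one_iff] at hcon
    obtain ⟨k, hk⟩ := hcon
    have hreal : (2 * W : ℝ) * (2 * Real.pi / M) = k * (2 * Real.pi) := by
      have h2 : (((2 * W : ℝ) * (2 * Real.pi / M) : ℝ) : ℂ) * Complex.I
          = (((k : ℝ) * (2 * Real.pi) : ℝ) : ℂ) * Complex.I := by
        push_cast
        push_cast at hk
        rw [mul_comm ((k:ℂ)) _] at hk ⊢
        linear_combination hk
      have h3 := mul_right_cancel₀ Complex.I_ne_zero h2
      exact_mod_cast h3
    have hpi : Real.pi ≠ 0 := Real.pi_ne_zero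
    have h4 : (2 * (W:ℝ)) * (2 * Real.pi) = ((k:ℝ) * M) * (2 * Real.pi) := by
      field_simp at hreal
      linear_combination (2 * Real.pi) * hreal
    have hWk : 2 * (W : ℝ) = (k:ℝ) * M := mul_right_cancel₀ (by positivity) h4
    have hWkZ : 2 * W = k * M := by exact_mod_cast hWk
    rcases eq_or_ne k 0 with hk0 | hk0
    · rw [hk0] at hWkZ; simp at hWkZ; omega
    · have h1 : (1:ℤ) ≤ |k| := Int.one_le_abs hk0
      have h2 : |2*W| = |k| * M := by
        rw [hWkZ, abs_mul]
        congr 1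
        exact abs_of_nonneg (by positivity)
      have h3 : |2*W| = 2 * (W.natAbs : ℤ) := by
        rw [abs_mul, Int.abs_eq_natAbs]
        simp
      have h4 : (M:ℤ) ≤ |k| * M := le_mul_of_one_le_left (by positivity) h1
      omega
  rw [geom_sum_eq hω1, hωM]
  simp

end Rot

section StepA

variable {n : ℕ}

lemma stepA (J : Finset ((Fin n →₀ ℕ) × (Fin n →₀ ℕ)))
    (a : (Fin n →₀ ℕ) × (Fin n →₀ ℕ) → ℂ) (w : Fin n → ℤ)
    (hW : ∀ p ∈ J, Wsum w p.1 + Wsum w p.2 = 0)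
    (hsym : ∀ p ∈ J, (p.2, p.1) ∈ J)
    (hherm : ∀ p : (Fin n →₀ ℕ) × (Fin n →₀ ℕ), a (p.2, p.1) = conj (a p))
    (hpsh : ∀ z V : Fin n → ℂ, 0 ≤ (leviForm J a z V).re) :
    ∀ p ∈ J, a p * ((Wsum w p.1 : ℤ) : ℂ)^2 = 0 := by
  set c : (Fin n →₀ ℕ) × (Fin n →₀ ℕ) → ℂ :=
    fun p => a p * ((Wsum w p.1 : ℤ) : ℂ)^2 with hc
  set G : (Fin n → ℂ) → ℂ :=
    fun y => ∑ p ∈ J, c p * mpow y p.1 * conj (mpow y p.2) with hG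
  have hGre : ∀ y : Fin n → ℂ, (G y).re ≤ 0 := by
    intro y
    have h1 := hpsh y (fun i => (w i : ℂ) * Complex.I * y i)
    rw [leviForm_curve J a w y hW] at h1
    rw [Complex.neg_re] at h1
    have h2 : G y = ∑ p ∈ J, a p * ((Wsum w p.1 : ℤ) : ℂ)^2 * mpow y p.1 *
        conj (mpow y p.2) := rfl
    rw [h2]
    linarith
  have hGconj : ∀ y : Fin n → ℂ, conj (G y) = G y := by
    intro y
    rw [hG]
    simp only [map_sum, map_mul, map_pow, map_intCast, Complex.conj_conj]
    refine Finset.sum_nbij' (fun p => (p.2, p.1)) (fun p => (p.2, p.1))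
      (fun p hp => hsym p hp) (fun p hp => hsym p hp)
      (fun p _ => rfl) (fun p _ => rfl) (fun p hp => ?_)
    have h2 : ((Wsum w p.2 : ℤ) : ℂ) = -((Wsum w p.1 : ℤ) : ℂ) := by
      have h4 : Wsum w p.2 = -Wsum w p.1 := by have := hW p hp; omega
      rw [h4]
      push_cast
      ring
    have h3 : conj (a p) = a (p.2, p.1) := (hherm p).symm
    simp only [hc, map_mul, map_pow, map_intCast]
    rw [h3, h2]
    ring
  have hGzero : ∀ z : Fin n → ℂ, G z = 0 := by
    intro z
    set B : ℕ := J.sup (fun p => (Wsum w p.1).natAbs) with hB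
    set M : ℕ := 2 * B + 1 with hM
    have hMB : ∀ p ∈ J, 2 * (Wsum w p.1).natAbs < M := by
      intro p hp
      have h := Finset.le_sup (f := fun p => (Wsum w p.1).natAbs) hp
      omega
    have hGrot : ∀ t : ℝ, G (rotp w t z) = ∑ p ∈ J,
        (c p * mpow z p.1 * conj (mpow z p.2)) *
          Complex.exp (((2 * Wsum w p.1 : ℤ) : ℂ) * (t : ℂ) * Complex.I) := by
      intro t
      rw [hG]
      refine Finset.sum_congr rfl fun p hp => ?_
      rw [mpow_rotp, conj_mpow_rotp]
      have h2 : Wsum w p.2 = -Wsum w p.1 := by have := hW p hp; omega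
      rw [h2]
      have hE : Complex.exp (-(((-Wsum w p.1 : ℤ) : ℂ) * (t : ℂ) * Complex.I))
          = Complex.exp (((Wsum w p.1 : ℤ) : ℂ) * (t : ℂ) * Complex.I) := by
        congr 1
        push_cast
        ring
      have hEE : Complex.exp (((2 * Wsum w p.1 : ℤ) : ℂ) * (t : ℂ) * Complex.I)
          = Complex.exp (((Wsum w p.1 : ℤ) : ℂ) * (t : ℂ) * Complex.I) *
            Complex.exp (((Wsum w p.1 : ℤ) : ℂ) * (t : ℂ) * Complex.I) := by
        rw [← Complex.exp_add]
        congr 1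
        push_cast
        ring
      rw [hE, hEE]
      ring
    have hsum0 : ∑ r ∈ Finset.range M, G (rotp w (2 * Real.pi * r / M) z) = 0 := by
      have e1 : ∑ r ∈ Finset.range M, G (rotp w (2 * Real.pi * r / M) z)
          = ∑ r ∈ Finset.range M, ∑ p ∈ J,
            (c p * mpow z p.1 * conj (mpow z p.2)) *
              Complex.exp (((2 * Wsum w p.1 : ℤ) : ℂ)
                * ((2 * Real.pi * r / M : ℝ) : ℂ) * Complex.I) :=
        Finset.sum_congr rfl (fun r _ => hGrot _)
      rw [e1, Finset.sum_comm]
      refine Finset.sum_eq_zero fun p hp => ?_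
      rw [← Finset.mul_sum]
      rcases eq_or_ne (Wsum w p.1) 0 with h0 | h0
      · rw [hc]
        simp [h0]
      · rw [roots_sum_zero (Wsum w p.1) M h0 (hMB p hp), mul_zero]
    have hre0 : ∀ r ∈ Finset.range M, (G (rotp w (2 * Real.pi * r / M) z)).re = 0 := by
      have hsumre : ∑ r ∈ Finset.range M, (G (rotp w (2 * Real.pi * r / M) z)).re = 0 := by
        rw [← Complex.re_sum, hsum0, Complex.zero_re]
      exact (Finset.sum_eq_zero_iff_of_nonpos (fun r _ => hGre _)).mp hsumre
    have h6 := hre0 0 (Finset.mem_range.mpr (by omega))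
    rw [show (2 * Real.pi * ((0:ℕ) : ℝ) / M : ℝ) = 0 by push_cast; ring] at h6
    rw [rotp_zero] at h6
    have h7 := hGconj z
    exact Complex.ext h6 (Complex.conj_eq_iff_im.mp h7)
  exact mpow_indep J c hGzero

end StepA

section Arith

/-- Key arithmetic: if `κ * α j = d j * s` for all `j` and `κ * A = k * s` (with
`κ = k - D`), then `κ / gcd(gcd d, k)` divides `s`. -/
lemma dvd_aux {l : ℕ} (d : Fin l → ℕ) (k s κ : ℕ) (hk : 0 < k)
    (hκ : κ = k - ∑ j, d j) (hD : ∑ j, d j < k)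
    (α : Fin l → ℕ) (hα : ∀ j, κ * α j = d j * s) :
    (κ / Nat.gcd (Finset.univ.gcd d) k) ∣ s := by
  set D := ∑ j, d j with hDdef
  set G0 := Finset.univ.gcd d with hG0
  set g := Nat.gcd G0 k with hg
  have hgk : g ∣ k := Nat.gcd_dvd_right _ _
  have hgG0 : g ∣ G0 := Nat.gcd_dvd_left _ _
  have hgd : ∀ j, g ∣ d j := fun j => hgG0.trans (Finset.gcd_dvd (Finset.mem_univ j))
  have hgD : g ∣ D := Finset.dvd_sum fun j _ => hgd j
  have hgκ : g ∣ κ := hκ ▸ Nat.dvd_sub hgk hgD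
  have hg0 : 0 < g := Nat.gcd_pos_of_pos_right _ hk
  -- global relation
  have hks : κ * ((∑ j, α j) + s) = k * s := by
    have h1 : κ * ∑ j, α j = D * s := by
      rw [Finset.mul_sum, Finset.sum_congr rfl fun j _ => hα j, hDdef, Finset.sum_mul]
    have h2 : D + κ = k := by omega
    calc κ * ((∑ j, α j) + s) = κ * ∑ j, α j + κ * s := by ring
      _ = D * s + κ * s := by rw [h1]
      _ = (D + κ) * s := by ring
      _ = k * s := by rw [h2]
  set κ' := κ / g with hκ'
  have hκ'g : κ' * g = κ := Nat.div_mul_cancel hgκ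
  have hdvd1 : ∀ j, κ' ∣ (d j / g) * s := by
    intro j
    refine ⟨α j, ?_⟩
    have h3 : ((d j / g) * s) * g = (κ' * α j) * g := by
      calc ((d j / g) * s) * g = ((d j / g) * g) * s := by ring
        _ = d j * s := by rw [Nat.div_mul_cancel (hgd j)]
        _ = κ * α j := (hα j).symm
        _ = (κ' * α j) * g := by rw [← hκ'g]; ring
    exact Nat.eq_of_mul_eq_mul_right hg0 h3
  have hdvd2 : κ' ∣ (k / g) * s := by
    refine ⟨(∑ j, α j) + s, ?_⟩
    have h3 : ((k / g) * s) * g = (κ' * ((∑ j, α j) + s)) * g := by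
      calc ((k / g) * s) * g = ((k / g) * g) * s := by ring
        _ = k * s := by rw [Nat.div_mul_cancel hgk]
        _ = κ * ((∑ j, α j) + s) := hks.symm
        _ = (κ' * ((∑ j, α j) + s)) * g := by rw [← hκ'g]; ring
    exact Nat.eq_of_mul_eq_mul_right hg0 h3
  have hQ : Finset.univ.gcd (fun j => d j / g) * g = G0 := by
    have h4 : G0 = Finset.univ.gcd (fun j => (d j / g) * g) := by
      rw [hG0]
      exact Finset.gcd_congr rfl fun j _ => (Nat.div_mul_cancel (hgd j)).symm
    rw [h4, Finset.gcd_mul_right]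
    simp
  have hgcd1 : Nat.gcd (Finset.univ.gcd (fun j => d j / g)) (k / g) = 1 := by
    have h5 : Finset.univ.gcd (fun j => d j / g) = G0 / g := by
      rw [← hQ, Nat.mul_div_cancel _ hg0]
    rw [h5]
    exact Nat.coprime_div_gcd_div_gcd hg0
  have hdvd3 : κ' ∣ Finset.univ.gcd (fun j => d j / g) * s := by
    have hdvd3' : κ' ∣ Finset.univ.gcd (fun j => (d j / g) * s) :=
      Finset.dvd_gcd fun j _ => hdvd1 j
    have heq : Finset.univ.gcd (fun j => (d j / g) * s)
        = Finset.univ.gcd (fun j => d j / g) * s := by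
      rw [Finset.gcd_mul_right]
      simp
    rwa [heq] at hdvd3'
  have hdvd4 : κ' ∣ Nat.gcd (Finset.univ.gcd (fun j => d j / g) * s) ((k / g) * s) :=
    Nat.dvd_gcd hdvd3 hdvd2
  rw [Nat.gcd_mul_right, hgcd1, one_mul] at hdvd4
  exact hdvd4

end Arith

section Emb

variable {l m : ℕ}

/-- Restriction of a multi-index on `Fin (l+m)` to the tail `Fin m`. -/
noncomputable def resF (l m : ℕ) (γ : Fin (l+m) →₀ ℕ) : Fin m →₀ ℕ :=
  Finsupp.equivFunOnFinite.symm (fun i => γ (Fin.natAdd l i))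

lemma resF_apply (γ : Fin (l+m) →₀ ℕ) (i : Fin m) : resF l m γ i = γ (Fin.natAdd l i) := rfl

lemma resF_sub (γ : Fin (l+m) →₀ ℕ) (i : Fin m) :
    resF l m (γ - Finsupp.single (Fin.natAdd l i) 1) = resF l m γ - Finsupp.single i 1 := by
  ext i'
  rw [Finsupp.tsub_apply, resF_apply, resF_apply, Finsupp.tsub_apply]
  congr 1
  simp [Finsupp.single_apply, Fin.ext_iff]

/-- Extension of a point of `ℂ^m` by ones. -/
noncomputable def embC (l m : ℕ) (z : Fin m → ℂ) : Fin (l+m) → ℂ :=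
  Fin.addCases (fun _ => (1:ℂ)) z

lemma embC_left (z : Fin m → ℂ) (j : Fin l) : embC l m z (Fin.castAdd m j) = 1 :=
  Fin.addCases_left j

lemma embC_right (z : Fin m → ℂ) (i : Fin m) : embC l m z (Fin.natAdd l i) = z i :=
  Fin.addCases_right i

/-- Extension of a vector of `ℂ^m` by zeros. -/
noncomputable def embV (l m : ℕ) (V : Fin m → ℂ) : Fin (l+m) → ℂ :=
  Fin.addCases (fun _ => (0:ℂ)) V

lemma embV_left (V : Fin m → ℂ) (j : Fin l) : embV l m V (Fin.castAdd m j) = 0 :=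
  Fin.addCases_left j

lemma embV_right (V : Fin m → ℂ) (i : Fin m) : embV l m V (Fin.natAdd l i) = V i :=
  Fin.addCases_right i

lemma mpow_emb (z : Fin m → ℂ) (γ : Fin (l+m) →₀ ℕ) :
    mpow (embC l m z) γ = mpow z (resF l m γ) := by
  unfold mpow
  rw [Fin.prod_univ_add]
  simp only [embC_left, embC_right, one_pow, Finset.prod_const_one, one_mul]
  rfl

lemma mpow_head (z : Fin (l+m) → ℂ) (γ : Fin (l+m) →₀ ℕ) :
    mpow z γ = (∏ j : Fin l, z (Fin.castAdd m j) ^ γ (Fin.castAdd m j)) *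
      mpow (fun i => z (Fin.natAdd l i)) (resF l m γ) := by
  unfold mpow
  exact Fin.prod_univ_add _

lemma mpow_scale (τ : ℂ) (z : Fin m → ℂ) (q : Fin m →₀ ℕ) :
    mpow (fun i => τ * z i) q = τ ^ (∑ i, q i) * mpow z q := by
  unfold mpow
  simp only [mul_pow]
  rw [Finset.prod_mul_distrib, Finset.prod_pow_eq_pow_sum]

/-- Restriction of a pair of multi-indices to the tail. -/
noncomputable def resP (l m : ℕ) (p : (Fin (l+m) →₀ ℕ) × (Fin (l+m) →₀ ℕ)) :
    (Fin m →₀ ℕ) × (Fin m →₀ ℕ) :=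
  (resF l m p.1, resF l m p.2)

lemma resP_fst (p : (Fin (l+m) →₀ ℕ) × (Fin (l+m) →₀ ℕ)) : (resP l m p).1 = resF l m p.1 := rfl

lemma resP_snd (p : (Fin (l+m) →₀ ℕ) × (Fin (l+m) →₀ ℕ)) : (resP l m p).2 = resF l m p.2 := rfl

lemma resP_swap (p : (Fin (l+m) →₀ ℕ) × (Fin (l+m) →₀ ℕ)) :
    resP l m (p.2, p.1) = ((resP l m p).2, (resP l m p).1) := rfl

end Emb

/-- let `P : ℂⁿ → ℝ` (`n = l + m`, `1 ≤ l`, `1 ≤ m`) be a non-constant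
plurisubharmonic polynomial without pluriharmonic terms, homogeneous of degree `2k`, and
homogeneous of degree `2d_j > 0` in `(z_j, z̄_j)` for `j = 1,…,l`, with `D = d_1+⋯+d_l < k`
and `d = gcd(d_1,…,d_l,k)`.  Then there is a plurisubharmonic polynomial
`Q : ℂ^{n−l} → ℝ` without pluriharmonic terms, homogeneous of degree `2k−2D`, whose
monomials all have holomorphic and anti-holomorphic degree divisible by `(k−D)/d`, such
that `P(z) = Q(τ z_{l+1},…,τ z_n)` whenever `τ^{(k−D)/d} = z_1^{d_1/d} ⋯ z_l^{d_l/d}`. -/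
theorem stmt13 {l m k : ℕ} (hl : 1 ≤ l) (hm : 1 ≤ m)
    (J : Finset ((Fin (l + m) →₀ ℕ) × (Fin (l + m) →₀ ℕ)))
    (a : (Fin (l + m) →₀ ℕ) × (Fin (l + m) →₀ ℕ) → ℂ)
    (d : Fin l → ℕ) (hd : ∀ j, 0 < d j) (hkD : ∑ j, d j < k)
    (hdeg : ∀ p ∈ J, (∑ i, p.1 i) + (∑ i, p.2 i) = 2 * k)
    (hsep : ∀ p ∈ J, ∀ j : Fin l,
      p.1 (Fin.castAdd m j) + p.2 (Fin.castAdd m j) = 2 * d j)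
    (hnp : ∀ p ∈ J, p.1 ≠ 0 ∧ p.2 ≠ 0)
    (hsym : ∀ p ∈ J, (p.2, p.1) ∈ J)
    (hherm : ∀ p : (Fin (l + m) →₀ ℕ) × (Fin (l + m) →₀ ℕ), a (p.2, p.1) = conj (a p))
    (hpsh : ∀ z V : Fin (l + m) → ℂ, 0 ≤ (leviForm J a z V).re)
    (hnc : ∃ z w : Fin (l + m) → ℂ, pval J a z ≠ pval J a w)
    (dG : ℕ) (hdG : dG = Nat.gcd (Finset.univ.gcd d) k) :
    ∃ (J' : Finset ((Fin m →₀ ℕ) × (Fin m →₀ ℕ)))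
      (b : (Fin m →₀ ℕ) × (Fin m →₀ ℕ) → ℂ),
      (∀ z V : Fin m → ℂ, 0 ≤ (leviForm J' b z V).re) ∧
      (∀ p ∈ J', (p.2, p.1) ∈ J') ∧
      (∀ p : (Fin m →₀ ℕ) × (Fin m →₀ ℕ), b (p.2, p.1) = conj (b p)) ∧
      (∀ p ∈ J', p.1 ≠ 0 ∧ p.2 ≠ 0) ∧
      (∀ p ∈ J', (∑ i, p.1 i) + (∑ i, p.2 i) = 2 * k - 2 * ∑ j, d j) ∧
      (∀ p ∈ J', (k - ∑ j, d j) / dG ∣ ∑ i, p.1 i ∧ (k - ∑ j, d j) / dG ∣ ∑ i, p.2 i) ∧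
      ∀ z : Fin (l + m) → ℂ, ∀ τ : ℂ,
        τ ^ ((k - ∑ j, d j) / dG) = ∏ j, z (Fin.castAdd m j) ^ (d j / dG) →
        pval J a z = pval J' b (fun i => τ * z (Fin.natAdd l i)) := by
  classical
  set κ : ℕ := k - ∑ j, d j with hκdef
  have hκpos : 0 < κ := by omega
  have hkpos : 0 < k := by omega
  -- the weights
  set w : Fin l → Fin (l + m) → ℤ :=
    fun j => Fin.addCases (fun j' => if j' = j then (κ : ℤ) else 0) (fun _ => -(d j : ℤ)) with hw
  have hwl : ∀ (j j' : Fin l), w j (Fin.castAdd m j') = if j' = j then (κ : ℤ) else 0 :=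
    fun j j' => Fin.addCases_left j'
  have hwr : ∀ (j : Fin l) (i : Fin m), w j (Fin.natAdd l i) = -(d j : ℤ) :=
    fun j i => Fin.addCases_right i
  have hWcomp : ∀ (j : Fin l) (γ : Fin (l + m) →₀ ℕ),
      Wsum (w j) γ = (κ : ℤ) * γ (Fin.castAdd m j)
        - (d j : ℤ) * ∑ i : Fin m, (γ (Fin.natAdd l i) : ℤ) := by
    intro j γ
    have hsplit : Wsum (w j) γ
        = (∑ j' : Fin l, w j (Fin.castAdd m j') * γ (Fin.castAdd m j'))
          + ∑ i : Fin m, w j (Fin.natAdd l i) * γ (Fin.natAdd l i) :=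
      Fin.sum_univ_add _
    rw [hsplit]
    have h1 : (∑ j' : Fin l, w j (Fin.castAdd m j') * γ (Fin.castAdd m j'))
        = (κ : ℤ) * γ (Fin.castAdd m j) := by
      rw [Finset.sum_congr rfl (fun j' _ => by rw [hwl j j', ite_mul, zero_mul]),
        Finset.sum_ite_eq' Finset.univ j (fun j' => (κ : ℤ) * γ (Fin.castAdd m j'))]
      simp
    have h2 : (∑ i : Fin m, w j (Fin.natAdd l i) * γ (Fin.natAdd l i))
        = -((d j : ℤ) * ∑ i : Fin m, (γ (Fin.natAdd l i) : ℤ)) := by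
      rw [Finset.sum_congr rfl (fun i _ => by rw [hwr j i]), Finset.mul_sum]
      rw [← Finset.sum_neg_distrib]
      exact Finset.sum_congr rfl fun i _ => by ring
    rw [h1, h2]
    ring
  -- tail degrees
  have htails : ∀ p ∈ J,
      (∑ i : Fin m, p.1 (Fin.natAdd l i)) + (∑ i : Fin m, p.2 (Fin.natAdd l i)) = 2 * κ := by
    intro p hp
    have h1 := hdeg p hp
    have e1 : (∑ i : Fin (l + m), p.1 i)
        = (∑ j : Fin l, p.1 (Fin.castAdd m j)) + ∑ i : Fin m, p.1 (Fin.natAdd l i) :=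
      Fin.sum_univ_add _
    have e2 : (∑ i : Fin (l + m), p.2 i)
        = (∑ j : Fin l, p.2 (Fin.castAdd m j)) + ∑ i : Fin m, p.2 (Fin.natAdd l i) :=
      Fin.sum_univ_add _
    rw [e1, e2] at h1
    have h2 : (∑ j : Fin l, p.1 (Fin.castAdd m j)) + (∑ j : Fin l, p.2 (Fin.castAdd m j))
        = 2 * ∑ j, d j := by
      rw [← Finset.sum_add_distrib, Finset.mul_sum]
      exact Finset.sum_congr rfl fun j _ => hsep p hp j
    omega
  have hW0 : ∀ j : Fin l, ∀ p ∈ J, Wsum (w j) p.1 + Wsum (w j) p.2 = 0 := by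
    intro j p hp
    rw [hWcomp, hWcomp]
    have h1' : (p.1 (Fin.castAdd m j) : ℤ) + (p.2 (Fin.castAdd m j) : ℤ) = 2 * (d j : ℤ) := by
      exact_mod_cast hsep p hp j
    have h2' : (∑ i : Fin m, (p.1 (Fin.natAdd l i) : ℤ))
        + (∑ i : Fin m, (p.2 (Fin.natAdd l i) : ℤ)) = 2 * (κ : ℤ) := by
      have := htails p hp
      push_cast
      exact_mod_cast this
    linear_combination (κ : ℤ) * h1' - (d j : ℤ) * h2'
  -- main structure result from plurisubharmonicity
  have hstruct : ∀ p ∈ J, a p ≠ 0 → ∀ j : Fin l,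
      κ * p.1 (Fin.castAdd m j) = d j * ∑ i : Fin m, p.1 (Fin.natAdd l i)
      ∧ κ * p.2 (Fin.castAdd m j) = d j * ∑ i : Fin m, p.2 (Fin.natAdd l i) := by
    intro p hp hap j
    have h1 := stepA J a (w j) (hW0 j) hsym hherm hpsh p hp
    have h2 : ((Wsum (w j) p.1 : ℤ) : ℂ) ^ 2 = 0 := by
      rcases mul_eq_zero.mp h1 with h | h
      · exact absurd h hap
      · exact h
    have h3 : Wsum (w j) p.1 = 0 := by
      have h4 : ((Wsum (w j) p.1 : ℤ) : ℂ) = 0 := by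
        exact pow_eq_zero_iff (two_ne_zero) |>.mp h2
      exact_mod_cast h4
    have h5 : Wsum (w j) p.2 = 0 := by have := hW0 j p hp; omega
    rw [hWcomp] at h3 h5
    constructor
    · have : (κ : ℤ) * p.1 (Fin.castAdd m j)
          = (d j : ℤ) * ∑ i : Fin m, (p.1 (Fin.natAdd l i) : ℤ) := by omega
      exact_mod_cast this
    · have : (κ : ℤ) * p.2 (Fin.castAdd m j)
          = (d j : ℤ) * ∑ i : Fin m, (p.2 (Fin.natAdd l i) : ℤ) := by omega
      exact_mod_cast this
  -- the reduced index set
  set J₀ : Finset ((Fin (l + m) →₀ ℕ) × (Fin (l + m) →₀ ℕ)) :=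
    J.filter (fun p => a p ≠ 0) with hJ₀
  have hJ₀mem : ∀ p, p ∈ J₀ ↔ p ∈ J ∧ a p ≠ 0 := fun p => Finset.mem_filter
  have hstruct₀ : ∀ p ∈ J₀, ∀ j : Fin l,
      κ * p.1 (Fin.castAdd m j) = d j * ∑ i : Fin m, p.1 (Fin.natAdd l i)
      ∧ κ * p.2 (Fin.castAdd m j) = d j * ∑ i : Fin m, p.2 (Fin.natAdd l i) := by
    intro p hp
    obtain ⟨h1, h2⟩ := (hJ₀mem p).mp hp
    exact hstruct p h1 h2
  have hswap₀ : ∀ p ∈ J₀, ((p.2, p.1) : (Fin (l + m) →₀ ℕ) × (Fin (l + m) →₀ ℕ)) ∈ J₀ := by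
    intro p hp
    obtain ⟨h1, h2⟩ := (hJ₀mem p).mp hp
    refine (hJ₀mem _).mpr ⟨hsym p h1, ?_⟩
    rw [hherm p]
    intro hcon
    apply h2
    have := congrArg conj hcon
    rwa [Complex.conj_conj, map_zero] at this
  -- injectivity of restriction on J₀
  have hinj : ∀ p ∈ J₀, ∀ q ∈ J₀, resP l m p = resP l m q → p = q := by
    intro p hp q hq he
    rw [resP, resP, Prod.mk.injEq] at he
    obtain ⟨he1, he2⟩ := he
    have hsum1 : (∑ i : Fin m, p.1 (Fin.natAdd l i)) = ∑ i : Fin m, q.1 (Fin.natAdd l i) := by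
      refine Finset.sum_congr rfl fun i _ => ?_
      rw [← resF_apply, ← resF_apply (l := l), he1]
    have hsum2 : (∑ i : Fin m, p.2 (Fin.natAdd l i)) = ∑ i : Fin m, q.2 (Fin.natAdd l i) := by
      refine Finset.sum_congr rfl fun i _ => ?_
      rw [← resF_apply, ← resF_apply (l := l), he2]
    have hfst : p.1 = q.1 := by
      ext i
      refine Fin.addCases (fun j => ?_) (fun i' => ?_) i
      · have ha := (hstruct₀ p hp j).1
        have hb := (hstruct₀ q hq j).1
        rw [hsum1] at ha
        have := ha.trans hb.symm
        exact Nat.eq_of_mul_eq_mul_left hκpos this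
      · rw [← resF_apply, ← resF_apply (l := l), he1]
    have hsnd : p.2 = q.2 := by
      ext i
      refine Fin.addCases (fun j => ?_) (fun i' => ?_) i
      · have ha := (hstruct₀ p hp j).2
        have hb := (hstruct₀ q hq j).2
        rw [hsum2] at ha
        have := ha.trans hb.symm
        exact Nat.eq_of_mul_eq_mul_left hκpos this
      · rw [← resF_apply, ← resF_apply (l := l), he2]
    exact Prod.ext hfst hsnd
  -- the data of Q
  set J' : Finset ((Fin m →₀ ℕ) × (Fin m →₀ ℕ)) := J₀.image (resP l m) with hJ'
  set b : (Fin m →₀ ℕ) × (Fin m →₀ ℕ) → ℂ :=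
    fun q => ∑ p ∈ J₀.filter (fun p => resP l m p = q), a p with hb
  have hbres : ∀ p ∈ J₀, b (resP l m p) = a p := by
    intro p hp
    have hfilt : J₀.filter (fun q => resP l m q = resP l m p) = {p} := by
      ext q
      simp only [Finset.mem_filter, Finset.mem_singleton]
      constructor
      · rintro ⟨hq, he⟩
        exact hinj q hq p hp he
      · rintro rfl
        exact ⟨hp, rfl⟩
    have e1 : b (resP l m p) = ∑ q ∈ J₀.filter (fun q => resP l m q = resP l m p), a q := rfl
    rw [e1, hfilt, Finset.sum_singleton]
  have himage : ∀ F : ((Fin m →₀ ℕ) × (Fin m →₀ ℕ)) → ℂ,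
      ∑ q ∈ J', F q = ∑ p ∈ J₀, F (resP l m p) := by
    intro F
    rw [hJ']
    exact Finset.sum_image fun p hp q hq he => hinj p hp q hq he
  -- dropping zero coefficients
  have hpval0 : ∀ z : Fin (l + m) → ℂ, pval J a z = pval J₀ a z := by
    intro z
    unfold pval
    rw [hJ₀]
    refine (Finset.sum_filter_of_ne fun p _ hne => ?_).symm
    intro h0
    exact hne (by rw [h0, zero_mul, zero_mul])
  have hlevi0 : ∀ z V : Fin (l + m) → ℂ, leviForm J a z V = leviForm J₀ a z V := by
    intro z V
    unfold leviForm
    rw [hJ₀]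
    refine (Finset.sum_filter_of_ne fun p _ hne => ?_).symm
    intro h0
    exact hne (by rw [h0, zero_mul])
  -- divisibility of tail degrees
  have hdvd1 : ∀ p ∈ J₀, κ / dG ∣ ∑ i : Fin m, p.1 (Fin.natAdd l i) := by
    intro p hp
    rw [hdG]
    exact dvd_aux d k _ κ hkpos hκdef hkD (fun j => p.1 (Fin.castAdd m j))
      (fun j => (hstruct₀ p hp j).1)
  have hdvd2 : ∀ p ∈ J₀, κ / dG ∣ ∑ i : Fin m, p.2 (Fin.natAdd l i) := by
    intro p hp
    rw [hdG]
    exact dvd_aux d k _ κ hkpos hκdef hkD (fun j => p.2 (Fin.castAdd m j))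
      (fun j => (hstruct₀ p hp j).2)
  have hgκ : dG ∣ κ := by
    rw [hdG, hκdef]
    refine Nat.dvd_sub (Nat.gcd_dvd_right _ _) (Finset.dvd_sum fun j _ => ?_)
    exact (Nat.gcd_dvd_left _ _).trans (Finset.gcd_dvd (Finset.mem_univ j))
  have hgd : ∀ j, dG ∣ d j := by
    intro j
    rw [hdG]
    exact (Nat.gcd_dvd_left _ _).trans (Finset.gcd_dvd (Finset.mem_univ j))
  -- the head monomials are powers of τ
  have hhead : ∀ p ∈ J₀, ∀ z : Fin (l + m) → ℂ, ∀ τ : ℂ,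
      τ ^ (κ / dG) = (∏ j, z (Fin.castAdd m j) ^ (d j / dG)) →
      ((∏ j : Fin l, z (Fin.castAdd m j) ^ (p.1 (Fin.castAdd m j)))
          = τ ^ (∑ i : Fin m, p.1 (Fin.natAdd l i))
        ∧ (∏ j : Fin l, z (Fin.castAdd m j) ^ (p.2 (Fin.castAdd m j)))
          = τ ^ (∑ i : Fin m, p.2 (Fin.natAdd l i))) := by
    intro p hp z τ hτ
    have hgen : ∀ (γ : Fin (l + m) →₀ ℕ),
        (∀ j : Fin l, κ * γ (Fin.castAdd m j) = d j * ∑ i : Fin m, γ (Fin.natAdd l i)) →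
        (κ / dG ∣ ∑ i : Fin m, γ (Fin.natAdd l i)) →
        (∏ j : Fin l, z (Fin.castAdd m j) ^ (γ (Fin.castAdd m j)))
          = τ ^ (∑ i : Fin m, γ (Fin.natAdd l i)) := by
      intro γ hγ hNdvd
      set s := ∑ i : Fin m, γ (Fin.natAdd l i) with hs
      set N := κ / dG with hN
      obtain ⟨e, he⟩ := hNdvd
      have hNg : N * dG = κ := Nat.div_mul_cancel hgκ
      have hdG0 : 0 < dG := by
        rw [hdG]; exact Nat.gcd_pos_of_pos_right _ hkpos
      have hN0 : 0 < N := by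
        rcases Nat.eq_zero_or_pos N with h | h
        · rw [h, zero_mul] at hNg; omega
        · exact h
      have hαj : ∀ j : Fin l, γ (Fin.castAdd m j) = (d j / dG) * e := by
        intro j
        have h1 : κ * γ (Fin.castAdd m j) = d j * (N * e) := by rw [← he]; exact hγ j
        have h2 : (N * dG) * γ (Fin.castAdd m j) = ((d j / dG) * dG) * (N * e) := by
          rw [hNg, Nat.div_mul_cancel (hgd j)]; exact h1
        have h3 : (N * γ (Fin.castAdd m j)) * dG = (N * ((d j / dG) * e)) * dG := by
          calc (N * γ (Fin.castAdd m j)) * dG = (N * dG) * γ (Fin.castAdd m j) := by ring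
            _ = ((d j / dG) * dG) * (N * e) := h2
            _ = (N * ((d j / dG) * e)) * dG := by ring
        have h4 := Nat.eq_of_mul_eq_mul_right hdG0 h3
        exact Nat.eq_of_mul_eq_mul_left hN0 h4
      calc (∏ j : Fin l, z (Fin.castAdd m j) ^ (γ (Fin.castAdd m j)))
          = ∏ j : Fin l, (z (Fin.castAdd m j) ^ (d j / dG)) ^ e := by
            refine Finset.prod_congr rfl fun j _ => ?_
            rw [hαj j, pow_mul]
        _ = (∏ j : Fin l, z (Fin.castAdd m j) ^ (d j / dG)) ^ e := by
            rw [Finset.prod_pow]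
        _ = (τ ^ N) ^ e := by rw [hτ]
        _ = τ ^ s := by rw [← pow_mul, ← he]
    exact ⟨hgen p.1 (fun j => (hstruct₀ p hp j).1) (hdvd1 p hp),
      hgen p.2 (fun j => (hstruct₀ p hp j).2) (hdvd2 p hp)⟩
  -- assemble
  refine ⟨J', b, ?_, ?_, ?_, ?_, ?_, ?_, ?_⟩
  · -- plurisubharmonicity of Q
    intro z V
    have hQlevi : leviForm J' b z V = leviForm J a (embC l m z) (embV l m V) := by
      rw [hlevi0, leviForm_eq_prod, leviForm_eq_prod]
      rw [himage (fun q => b q * ((∑ i, (q.1 i : ℂ) * mpow z (q.1 - Finsupp.single i 1) * V i) *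
        conj (∑ i, (q.2 i : ℂ) * mpow z (q.2 - Finsupp.single i 1) * V i)))]
      refine Finset.sum_congr rfl fun p hp => ?_
      rw [hbres p hp]
      have hsums : ∀ γ : Fin (l + m) →₀ ℕ,
          (∑ i, ((resF l m γ) i : ℂ) * mpow z (resF l m γ - Finsupp.single i 1) * V i)
            = ∑ i, (γ i : ℂ) * mpow (embC l m z) (γ - Finsupp.single i 1) * embV l m V i := by
        intro γ
        have hsplit : (∑ i : Fin (l + m), (γ i : ℂ)
            * mpow (embC l m z) (γ - Finsupp.single i 1) * embV l m V i)
            = (∑ j : Fin l, (γ (Fin.castAdd m j) : ℂ)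
                * mpow (embC l m z) (γ - Finsupp.single (Fin.castAdd m j) 1)
                * embV l m V (Fin.castAdd m j))
              + ∑ i : Fin m, (γ (Fin.natAdd l i) : ℂ)
                * mpow (embC l m z) (γ - Finsupp.single (Fin.natAdd l i) 1)
                * embV l m V (Fin.natAdd l i) :=
          Fin.sum_univ_add _
        rw [hsplit]
        have hzero : (∑ j : Fin l, (γ (Fin.castAdd m j) : ℂ)
            * mpow (embC l m z) (γ - Finsupp.single (Fin.castAdd m j) 1)
            * embV l m V (Fin.castAdd m j)) = 0 := by
          refine Finset.sum_eq_zero fun j _ => ?_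
          rw [embV_left, mul_zero]
        rw [hzero, zero_add]
        refine Finset.sum_congr rfl fun i _ => ?_
        rw [embV_right, mpow_emb, resF_sub, resF_apply]
      rw [resP, hsums p.1, hsums p.2]
    rw [hQlevi]
    exact hpsh _ _
  · -- symmetry of J'
    intro q hq
    rw [hJ'] at hq ⊢
    obtain ⟨p, hp, rfl⟩ := Finset.mem_image.mp hq
    exact Finset.mem_image.mpr ⟨(p.2, p.1), hswap₀ p hp, resP_swap p⟩
  · -- hermitian symmetry of b
    intro q
    have e1 : b (q.2, q.1) = ∑ p ∈ J₀.filter (fun p => resP l m p = (q.2, q.1)), a p := rfl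
    have e2 : b q = ∑ p ∈ J₀.filter (fun p => resP l m p = q), a p := rfl
    rw [e1, e2, map_sum]
    refine Finset.sum_nbij' (fun p => (p.2, p.1)) (fun p => (p.2, p.1)) ?_ ?_
      (fun p _ => rfl) (fun p _ => rfl) ?_
    · intro p hp
      obtain ⟨hp0, he⟩ := Finset.mem_filter.mp hp
      refine Finset.mem_filter.mpr ⟨hswap₀ p hp0, ?_⟩
      rw [resP_swap, he]
    · intro p hp
      obtain ⟨hp0, he⟩ := Finset.mem_filter.mp hp
      refine Finset.mem_filter.mpr ⟨hswap₀ p hp0, ?_⟩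
      rw [resP_swap, he]
    · intro p _
      have h1 := hherm (p.2, p.1)
      rw [show ((p.2, p.1).2, (p.2, p.1).1) = p from rfl] at h1
      exact h1
  · -- no pluriharmonic terms in Q
    intro q hq
    rw [hJ'] at hq
    obtain ⟨p, hp, rfl⟩ := Finset.mem_image.mp hq
    obtain ⟨hpJ, hpa⟩ := (hJ₀mem p).mp hp
    constructor
    · intro h0
      have h0' : resF l m p.1 = 0 := h0
      have hri : ∀ i : Fin m, p.1 (Fin.natAdd l i) = 0 := by
        intro i
        have h2 : resF l m p.1 i = 0 := by simp [h0']
        exact h2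
      have hα0 : p.1 = 0 := by
        have hs0 : (∑ i : Fin m, p.1 (Fin.natAdd l i)) = 0 :=
          Finset.sum_eq_zero fun i _ => hri i
        ext i
        refine Fin.addCases (fun j => ?_) (fun i' => ?_) i
        · have h1 := (hstruct₀ p hp j).1
          rw [hs0, mul_zero] at h1
          simp only [Finsupp.coe_zero, Pi.zero_apply]
          rcases Nat.mul_eq_zero.mp h1 with h | h
          · omega
          · exact h
        · simp only [Finsupp.coe_zero, Pi.zero_apply]
          exact hri i'
      exact (hnp p hpJ).1 hα0
    · intro h0
      have h0' : resF l m p.2 = 0 := h0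
      have hri : ∀ i : Fin m, p.2 (Fin.natAdd l i) = 0 := by
        intro i
        have h2 : resF l m p.2 i = 0 := by simp [h0']
        exact h2
      have hβ0 : p.2 = 0 := by
        have hs0 : (∑ i : Fin m, p.2 (Fin.natAdd l i)) = 0 :=
          Finset.sum_eq_zero fun i _ => hri i
        ext i
        refine Fin.addCases (fun j => ?_) (fun i' => ?_) i
        · have h1 := (hstruct₀ p hp j).2
          rw [hs0, mul_zero] at h1
          simp only [Finsupp.coe_zero, Pi.zero_apply]
          rcases Nat.mul_eq_zero.mp h1 with h | h
          · omega
          · exact h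
        · simp only [Finsupp.coe_zero, Pi.zero_apply]
          exact hri i'
      exact (hnp p hpJ).2 hβ0
  · -- degrees of Q
    intro q hq
    rw [hJ'] at hq
    obtain ⟨p, hp, rfl⟩ := Finset.mem_image.mp hq
    obtain ⟨hpJ, _⟩ := (hJ₀mem p).mp hp
    have ht := htails p hpJ
    have e1 : (∑ i, (resP l m p).1 i) = ∑ i : Fin m, p.1 (Fin.natAdd l i) := rfl
    have e2 : (∑ i, (resP l m p).2 i) = ∑ i : Fin m, p.2 (Fin.natAdd l i) := rfl
    rw [e1, e2]
    omega
  · -- divisibility of the degrees of Q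
    intro q hq
    rw [hJ'] at hq
    obtain ⟨p, hp, rfl⟩ := Finset.mem_image.mp hq
    have e1 : (∑ i, (resP l m p).1 i) = ∑ i : Fin m, p.1 (Fin.natAdd l i) := rfl
    have e2 : (∑ i, (resP l m p).2 i) = ∑ i : Fin m, p.2 (Fin.natAdd l i) := rfl
    rw [e1, e2]
    exact ⟨hdvd1 p hp, hdvd2 p hp⟩
  · -- the substitution identity
    intro z τ hτ
    rw [hpval0 z]
    unfold pval
    rw [himage (fun q => b q * mpow (fun i => τ * z (Fin.natAdd l i)) q.1
      * conj (mpow (fun i => τ * z (Fin.natAdd l i)) q.2))]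
    refine Finset.sum_congr rfl fun p hp => ?_
    rw [hbres p hp]
    obtain ⟨hh1, hh2⟩ := hhead p hp z τ hτ
    rw [resP, mpow_scale, mpow_scale]
    have e1 : (∑ i, (resF l m p.1) i) = ∑ i : Fin m, p.1 (Fin.natAdd l i) := rfl
    have e2 : (∑ i, (resF l m p.2) i) = ∑ i : Fin m, p.2 (Fin.natAdd l i) := rfl
    rw [e1, e2]
    rw [mpow_head z p.1, mpow_head z p.2, hh1, hh2]
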